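/- arXiv:2501.09917 — 2 statements merged into one kernel-verified Lean document; each statement's English description precedes it below -/
import Mathlib

section
/- (Covariance of scaled residual levels with future scaled residual growth under heterogeneous skill-growth profiles.) In the HIP setting, assume in addition that cov(θ_t, ν_{t'}) = 0 whenever t' > t and cov(θ_t, ε_s) = 0 for all t, s. Then for all integers t, t' with t' − t ≥ k + 1, if μ_t, μ_{t'}, μ_{t'−1} are all nonzero, then cov( w_t/μ_t , w_{t'}/μ_{t'} − w_{t'−1}/μ_{t'−1} ) = λ_{t'} · cov(θ_t, δ). -/
set_option linter.unusedSectionVars false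

open MeasureTheory ProbabilityTheory

/-- Covariance of two real-valued random variables under measure `P`. -/
noncomputable def cov {Ω : Type*} [MeasurableSpace Ω] (P : Measure Ω) (X Y : Ω → ℝ) : ℝ :=
  ∫ ω, (X ω - ∫ a, X a ∂P) * (Y ω - ∫ a, Y a ∂P) ∂P

/-- Variance of a real-valued random variable under measure `P`. -/
noncomputable def Var {Ω : Type*} [MeasurableSpace Ω] (P : Measure Ω) (X : Ω → ℝ) : ℝ :=
  cov P X X

section covAux
variable {Ω : Type*} [MeasurableSpace Ω] {P : Measure Ω} [IsProbabilityMeasure P]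
  {X Y Z : Ω → ℝ}

lemma l2_mul_int (hX : MemLp X 2 P) (hY : MemLp Y 2 P) :
    Integrable (fun ω => X ω * Y ω) P := by
  have h := hY.smul (φ := X) hX (r := 1)
    (hpqr := ⟨by simp [one_div, ENNReal.inv_two_add_inv_two]⟩)
  exact h.integrable le_rfl

lemma cov_symm : cov P X Y = cov P Y X := by
  unfold cov; congr 1; funext ω; ring

lemma cov_smul_left (c : ℝ) : cov P (fun ω => c * X ω) Y = c * cov P X Y := by
  unfold cov
  rw [← integral_const_mul, integral_const_mul]
  congr 1; funext ω; ring

lemma cov_add_left (hX : MemLp X 2 P) (hY : MemLp Y 2 P) (hZ : MemLp Z 2 P) :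
    cov P (fun ω => X ω + Y ω) Z = cov P X Z + cov P Y Z := by
  have hXi : Integrable X P := hX.integrable (by norm_num)
  have hYi : Integrable Y P := hY.integrable (by norm_num)
  have hX' : MemLp (fun ω => X ω - ∫ a, X a ∂P) 2 P := hX.sub (memLp_const _)
  have hY' : MemLp (fun ω => Y ω - ∫ a, Y a ∂P) 2 P := hY.sub (memLp_const _)
  have hZ' : MemLp (fun ω => Z ω - ∫ a, Z a ∂P) 2 P := hZ.sub (memLp_const _)
  unfold cov
  rw [integral_add hXi hYi, ← integral_add (l2_mul_int hX' hZ') (l2_mul_int hY' hZ')]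
  congr 1; funext ω; ring

lemma cov_smul_right (c : ℝ) : cov P X (fun ω => c * Y ω) = c * cov P X Y := by
  rw [cov_symm, cov_smul_left, cov_symm]

lemma cov_add_right (hX : MemLp X 2 P) (hY : MemLp Y 2 P) (hZ : MemLp Z 2 P) :
    cov P X (fun ω => Y ω + Z ω) = cov P X Y + cov P X Z := by
  rw [cov_symm, cov_add_left hY hZ hX, cov_symm (X := Y), cov_symm (X := Z)]

end covAux

/-- Covariance of scaled residual levels with future scaled residual growth under HIP:
for `t' - t ≥ k + 1`, `cov (w_t/μ_t, w_{t'}/μ_{t'} − w_{t'−1}/μ_{t'−1}) = λ_{t'} cov(θ_t, δ)`. -/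
theorem HIP_cov_level_future_growth
    {Ω : Type*} [MeasurableSpace Ω] (P : Measure Ω) [IsProbabilityMeasure P]
    (θ ε : ℤ → Ω → ℝ) (μ : ℤ → ℝ) (w : ℤ → Ω → ℝ)
    (hθ : ∀ t, MemLp (θ t) 2 P) (hε : ∀ t, MemLp (ε t) 2 P)
    (hw : ∀ t ω, w t ω = μ t * θ t ω + ε t ω)
    (k : ℕ) (hk : 1 ≤ k)
    (δ : Ω → ℝ) (lam : ℤ → ℝ) (ν : ℤ → Ω → ℝ)
    (hδ : MemLp δ 2 P) (hν : ∀ t, MemLp (ν t) 2 P)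
    (hHIP : ∀ (t : ℤ) (ω : Ω), θ t ω - θ (t - 1) ω = lam t * δ ω + ν t ω)
    (hδν : ∀ t : ℤ, cov P δ (ν t) = 0)
    (hνν : ∀ t t' : ℤ, t ≠ t' → cov P (ν t) (ν t') = 0)
    (hδε : ∀ t : ℤ, cov P δ (ε t) = 0)
    (hνε : ∀ t t' : ℤ, cov P (ν t) (ε t') = 0)
    (hεε : ∀ t t' : ℤ, (k : ℤ) ≤ |t - t'| → cov P (ε t) (ε t') = 0)
    (hθν : ∀ t t' : ℤ, t < t' → cov P (θ t) (ν t') = 0)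
    (hθε : ∀ t s : ℤ, cov P (θ t) (ε s) = 0) :
    ∀ t t' : ℤ, (k : ℤ) + 1 ≤ t' - t →
      μ t ≠ 0 → μ t' ≠ 0 → μ (t' - 1) ≠ 0 →
      cov P (fun ω => w t ω / μ t)
        (fun ω => w t' ω / μ t' - w (t' - 1) ω / μ (t' - 1)) =
        lam t' * cov P (θ t) δ := by
  intro t t' hdt h1 h2 h3
  have e : ∀ s : ℤ, μ s ≠ 0 → ∀ ω, w s ω / μ s = θ s ω + (μ s)⁻¹ * ε s ω := by
    intro s hs ω; rw [hw]; field_simp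
  have hA : (fun ω => w t ω / μ t) = fun ω => θ t ω + (μ t)⁻¹ * ε t ω := by
    funext ω; exact e t h1 ω
  have hB : (fun ω => w t' ω / μ t' - w (t' - 1) ω / μ (t' - 1)) =
      fun ω => lam t' * δ ω +
        (ν t' ω + ((μ t')⁻¹ * ε t' ω + -(μ (t' - 1))⁻¹ * ε (t' - 1) ω)) := by
    funext ω
    rw [e t' h2 ω, e (t' - 1) h3 ω]
    linear_combination hHIP t' ω
  have mεt' : MemLp (fun ω => (μ t')⁻¹ * ε t' ω) 2 P := (hε t').const_mul _
  have mεt1 : MemLp (fun ω => -(μ (t' - 1))⁻¹ * ε (t' - 1) ω) 2 P :=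
    (hε (t' - 1)).const_mul _
  have msum2 : MemLp
      (fun ω => (μ t')⁻¹ * ε t' ω + -(μ (t' - 1))⁻¹ * ε (t' - 1) ω) 2 P :=
    mεt'.add mεt1
  have msum1 : MemLp
      (fun ω => ν t' ω + ((μ t')⁻¹ * ε t' ω + -(μ (t' - 1))⁻¹ * ε (t' - 1) ω)) 2 P :=
    (hν t').add msum2
  have mδl : MemLp (fun ω => lam t' * δ ω) 2 P := hδ.const_mul _
  have msumB : MemLp
      (fun ω => lam t' * δ ω +
        (ν t' ω + ((μ t')⁻¹ * ε t' ω + -(μ (t' - 1))⁻¹ * ε (t' - 1) ω))) 2 P :=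
    mδl.add msum1
  have mεscaled : MemLp (fun ω => (μ t)⁻¹ * ε t ω) 2 P := (hε t).const_mul _
  rw [hA, hB]
  rw [cov_add_left (hθ t) mεscaled msumB]
  rw [cov_smul_left]
  rw [cov_add_right (hθ t) mδl msum1, cov_add_right (hθ t) (hν t') msum2,
    cov_add_right (hθ t) mεt' mεt1]
  rw [cov_add_right (hε t) mδl msum1, cov_add_right (hε t) (hν t') msum2,
    cov_add_right (hε t) mεt' mεt1]
  simp only [cov_smul_right]
  have z1 : cov P (θ t) (ν t') = 0 := hθν t t' (by omega)
  have z4 : cov P (ε t) δ = 0 := by rw [cov_symm]; exact hδε t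
  have z5 : cov P (ε t) (ν t') = 0 := by rw [cov_symm]; exact hνε t' t
  have z6 : cov P (ε t) (ε t') = 0 :=
    hεε t t' (by rw [abs_of_nonpos (by omega)]; omega)
  have z7 : cov P (ε t) (ε (t' - 1)) = 0 :=
    hεε t (t' - 1) (by rw [abs_of_nonpos (by omega)]; omega)
  rw [z1, z4, z5, z6, z7, hθε t t', hθε t (t' - 1)]
  ring
end

section
/- (Quasi-differenced long autocovariance in the fixed-effect plus AR(1) model.) In the fixed-effect/AR(1) setting, for all integers t, t' with t' ≤ t − k − 1, cov(w_{t'}, w_t) − ρ_t · cov(w_{t'}, w_{t−1}) = μ_{t'} · (μ_t − ρ_t · μ_{t−1}) · Var(ψ). -/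
open MeasureTheory ProbabilityTheory

section helpers
variable {Ω : Type*} [MeasurableSpace Ω] (P : Measure Ω) [IsProbabilityMeasure P]

omit [IsProbabilityMeasure P] in
lemma myL2_mul_integrable {X Y : Ω → ℝ} (hX : MemLp X 2 P) (hY : MemLp Y 2 P) :
    Integrable (fun ω => X ω * Y ω) P := by
  have h : MemLp (X • Y) 1 P :=
    haveI : ENNReal.HolderTriple 2 2 1 := ⟨by simp [ENNReal.inv_two_add_inv_two]⟩
    hY.smul hX
  exact memLp_one_iff_integrable.mp h

omit [IsProbabilityMeasure P] in
lemma myCov_comm (X Y : Ω → ℝ) : cov P X Y = cov P Y X := by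
  unfold cov; congr 1; funext ω; ring

lemma myCov_add_right (X Y Z : Ω → ℝ) (hX : MemLp X 2 P) (hY : MemLp Y 2 P)
    (hZ : MemLp Z 2 P) :
    cov P X (fun ω => Y ω + Z ω) = cov P X Y + cov P X Z := by
  unfold cov
  have h1 : ∫ a, (Y a + Z a) ∂P = (∫ a, Y a ∂P) + ∫ a, Z a ∂P :=
    integral_add (hY.integrable one_le_two) (hZ.integrable one_le_two)
  rw [h1]
  have e : ∀ ω, (X ω - ∫ a, X a ∂P) * (Y ω + Z ω - ((∫ a, Y a ∂P) + ∫ a, Z a ∂P)) =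
      (X ω - ∫ a, X a ∂P) * (Y ω - ∫ a, Y a ∂P) +
      (X ω - ∫ a, X a ∂P) * (Z ω - ∫ a, Z a ∂P) := fun ω => by ring
  simp_rw [e]
  exact integral_add
    (myL2_mul_integrable P (hX.sub (memLp_const _)) (hY.sub (memLp_const _)))
    (myL2_mul_integrable P (hX.sub (memLp_const _)) (hZ.sub (memLp_const _)))

omit [IsProbabilityMeasure P] in
lemma myCov_const_mul_right (c : ℝ) (X Y : Ω → ℝ) :
    cov P X (fun ω => c * Y ω) = c * cov P X Y := by
  unfold cov
  rw [integral_const_mul]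
  conv_rhs => rw [← integral_const_mul]
  congr 1; funext ω; ring

lemma myCov_add_left (X Y Z : Ω → ℝ) (hX : MemLp X 2 P) (hY : MemLp Y 2 P)
    (hZ : MemLp Z 2 P) :
    cov P (fun ω => X ω + Y ω) Z = cov P X Z + cov P Y Z := by
  rw [myCov_comm, myCov_add_right P Z X Y hZ hX hY, myCov_comm P Z X, myCov_comm P Z Y]

omit [IsProbabilityMeasure P] in
lemma myCov_const_mul_left (c : ℝ) (X Y : Ω → ℝ) :
    cov P (fun ω => c * X ω) Y = c * cov P X Y := by
  rw [myCov_comm, myCov_const_mul_right, myCov_comm]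

lemma myCov_triple_right (b : ℝ) (X g f' e' : Ω → ℝ)
    (hX : MemLp X 2 P) (hg : MemLp g 2 P) (hf' : MemLp f' 2 P) (he' : MemLp e' 2 P) :
    cov P X (fun ω => b * g ω + f' ω + e' ω) =
      b * cov P X g + cov P X f' + cov P X e' := by
  have hbg : MemLp (fun ω => b * g ω) 2 P := hg.const_mul b
  calc cov P X (fun ω => b * g ω + f' ω + e' ω)
      = cov P X (fun ω => b * g ω + f' ω) + cov P X e' :=
        myCov_add_right P X (fun ω => b * g ω + f' ω) e' hX (hbg.add hf') he'
    _ = (cov P X (fun ω => b * g ω) + cov P X f') + cov P X e' := by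
        rw [myCov_add_right P X (fun ω => b * g ω) f' hX hbg hf']
    _ = b * cov P X g + cov P X f' + cov P X e' := by
        rw [myCov_const_mul_right]

lemma myCov_triple_left (a : ℝ) (g f e Z : Ω → ℝ)
    (hg : MemLp g 2 P) (hf : MemLp f 2 P) (he : MemLp e 2 P) (hZ : MemLp Z 2 P) :
    cov P (fun ω => a * g ω + f ω + e ω) Z =
      a * cov P g Z + cov P f Z + cov P e Z := by
  have hag : MemLp (fun ω => a * g ω) 2 P := hg.const_mul a
  calc cov P (fun ω => a * g ω + f ω + e ω) Z
      = cov P (fun ω => a * g ω + f ω) Z + cov P e Z :=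
        myCov_add_left P (fun ω => a * g ω + f ω) e Z (hag.add hf) he hZ
    _ = (cov P (fun ω => a * g ω) Z + cov P f Z) + cov P e Z := by
        rw [myCov_add_left P (fun ω => a * g ω) f Z hag hf hZ]
    _ = a * cov P g Z + cov P f Z + cov P e Z := by
        rw [myCov_const_mul_left]

end helpers

/-- Quasi-differenced long autocovariance in the fixed-effect plus AR(1) model:
for `t' ≤ t − k − 1`,
`cov (w t') (w t) − ρ t * cov (w t') (w (t−1)) = μ t' * (μ t − ρ t * μ (t−1)) * Var ψ`. -/
theorem FE_AR1_quasi_differenced_autocov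
    {Ω : Type*} [MeasurableSpace Ω] (P : Measure Ω) [IsProbabilityMeasure P]
    (μ ρ : ℤ → ℝ) (ψ : Ω → ℝ) (φ ν ε : ℤ → Ω → ℝ) (w : ℤ → Ω → ℝ)
    (hψ : MemLp ψ 2 P) (hφ : ∀ t, MemLp (φ t) 2 P)
    (hν : ∀ t, MemLp (ν t) 2 P) (hε : ∀ t, MemLp (ε t) 2 P)
    (hw : ∀ t ω, w t ω = μ t * ψ ω + φ t ω + ε t ω)
    (hrec : ∀ t ω, φ t ω = ρ t * φ (t - 1) ω + ν t ω)
    (k : ℕ) (hk : 1 ≤ k)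
    (hψφ : ∀ t : ℤ, cov P ψ (φ t) = 0)
    (hψε : ∀ t : ℤ, cov P ψ (ε t) = 0)
    (hφε : ∀ t t' : ℤ, cov P (φ t) (ε t') = 0)
    (hφν : ∀ t t' : ℤ, t' < t → cov P (φ t') (ν t) = 0)
    (hεε : ∀ t t' : ℤ, (k : ℤ) ≤ |t - t'| → cov P (ε t) (ε t') = 0) :
    ∀ t t' : ℤ, t' ≤ t - k - 1 →
      cov P (w t') (w t) - ρ t * cov P (w t') (w (t - 1)) =
        μ t' * (μ t - ρ t * μ (t - 1)) * Var P ψ := by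
  intro t t' ht
  have ew : ∀ s : ℤ, w s = fun ω => μ s * ψ ω + φ s ω + ε s ω := fun s => funext (hw s)
  -- long-lag ε covariances vanish
  have hεz : ∀ s : ℤ, t' + k ≤ s → cov P (ε t') (ε s) = 0 := fun s hs =>
    hεε t' s (le_trans (by omega : (k : ℤ) ≤ -(t' - s)) (neg_le_abs _))
  -- AR(1) step for the φ covariance
  have hφφ : cov P (φ t') (φ t) = ρ t * cov P (φ t') (φ (t - 1)) := by
    rw [funext (hrec t) , myCov_add_right P (φ t') (fun ω => ρ t * φ (t - 1) ω) (ν t)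
      (hφ t') ((hφ (t - 1)).const_mul _) (hν t), myCov_const_mul_right,
      hφν t t' (by omega), add_zero]
  -- generic expansion of cov (w t') (w s)
  have expand : ∀ s : ℤ, cov P (w t') (w s) =
      μ t' * μ s * cov P ψ ψ + cov P (φ t') (φ s) + cov P (ε t') (ε s) := by
    intro s
    have hZ : MemLp (fun ω => μ s * ψ ω + φ s ω + ε s ω) 2 P :=
      ((hψ.const_mul (μ s)).add (hφ s)).add (hε s)
    rw [ew t', ew s,
      myCov_triple_left P (μ t') ψ (φ t') (ε t') _ hψ (hφ t') (hε t') hZ,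
      myCov_triple_right P (μ s) ψ ψ (φ s) (ε s) hψ hψ (hφ s) (hε s),
      myCov_triple_right P (μ s) (φ t') ψ (φ s) (ε s) (hφ t') hψ (hφ s) (hε s),
      myCov_triple_right P (μ s) (ε t') ψ (φ s) (ε s) (hε t') hψ (hφ s) (hε s),
      hψφ s, hψε s, hφε t' s, myCov_comm P (φ t') ψ, hψφ t', myCov_comm P (ε t') ψ,
      hψε t', myCov_comm P (ε t') (φ s), hφε s t']
    ring
  rw [expand t, expand (t - 1), hεz t (by omega), hεz (t - 1) (by omega), hφφ]
  show _ = μ t' * (μ t - ρ t * μ (t - 1)) * cov P ψ ψ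
  ring
end
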